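/- Fix ε with 0 ≤ ε < 1 and a player i with true valuation v_i; let v̄_k (k ≠ i) be the other players' reported valuations. Let x* be a feasible allocation maximizing v_i(x_i)^{b_i}·Π_{k≠i} v̄_k(x_k)^{b_k}, let x*_{-i} be a feasible allocation maximizing Π_{k≠i} v̄_k(x_k)^{b_k}, assume all values v_i(x*_i), v̄_k(x*_k), v̄_k((x*_{-i})_k) (k ≠ i) are positive, and set f_i = (Π_{k≠i} v̄_k(x*_k)^{b_k} / Π_{k≠i} v̄_k((x*_{-i})_k)^{b_k})^{1/b_i}. Let x̃ be ANY feasible allocation (e.g. the approximate Proportionally Fair allocation computed after player i misreports), and let x̃_{-i} be any feasible allocation with Π_{k≠i} v̄_k((x̃_{-i})_k)^{b_k} ≥ (1−ε)·Π_{k≠i} v̄_k((x*_{-i})_k)^{b_k}, and define f̃_i = min{1, (Π_{k≠i} v̄_k(x̃_k)^{b_k} / Π_{k≠i} v̄_k((x̃_{-i})_k)^{b_k})^{1/b_i}}. Then f̃_i·v_i(x̃_i) ≤ (1−ε)^{−1}·f_i·v_i(x*_i); consequently, under the adapted Partial Allocation mechanism using (1−ε)-approximate Proportionally Fair computations, a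 player who misreports her preferences can increase her valuation by at most a factor (1−ε)^{−2} over truthful reporting. -/

import Mathlib

open Finset

/-- robustness of truthfulness. Under the adapted Partial Allocation
mechanism with `(1−ε)`-approximate Proportionally Fair computations, no (possibly untruthful)
outcome can give player `i` more than `(1−ε)⁻¹` times `f_i·v_i(x*_i)`; consequently
misreporting can increase her valuation by at most a factor `(1−ε)⁻²`. -/
theorem stmt_12 {n m : ℕ} (hn : 2 ≤ n) (i : Fin n)
    (ε : ℝ) (hε0 : 0 ≤ ε) (hε1 : ε < 1)
    (b : Fin n → ℝ) (hb : ∀ k, 1 ≤ b k)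
    (vtrue : (Fin m → ℝ) → ℝ)
    (vbar : Fin n → (Fin m → ℝ) → ℝ)
    (hvtrue_nonneg : ∀ y : Fin m → ℝ, (∀ j, 0 ≤ y j) → 0 ≤ vtrue y)
    (hvtrue_hom : ∀ c : ℝ, 0 ≤ c → ∀ y : Fin m → ℝ, vtrue (c • y) = c * vtrue y)
    (hvbar_nonneg : ∀ k, k ≠ i → ∀ y : Fin m → ℝ, (∀ j, 0 ≤ y j) → 0 ≤ vbar k y)
    (hvbar_hom : ∀ k, k ≠ i → ∀ c : ℝ, 0 ≤ c → ∀ y : Fin m → ℝ, vbar k (c • y) = c * vbar k y)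
    -- x* : exact PF allocation w.r.t. player i's true valuation and the others' reports
    (xstar : Fin n → Fin m → ℝ)
    (hxstar_nonneg : ∀ k j, 0 ≤ xstar k j) (hxstar_feas : ∀ j, ∑ k, xstar k j ≤ 1)
    (hxstar_max : ∀ x : Fin n → Fin m → ℝ,
      (∀ k j, 0 ≤ x k j) → (∀ j, ∑ k, x k j ≤ 1) →
      vtrue (x i) ^ b i * ∏ k ∈ univ.erase i, vbar k (x k) ^ b k
        ≤ vtrue (xstar i) ^ b i * ∏ k ∈ univ.erase i, vbar k (xstar k) ^ b k)
    -- x*_{-i} : exact PF allocation in player i's absence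
    (xmi : Fin n → Fin m → ℝ)
    (hxmi_nonneg : ∀ k j, 0 ≤ xmi k j) (hxmi_feas : ∀ j, ∑ k, xmi k j ≤ 1)
    (hxmi_max : ∀ x : Fin n → Fin m → ℝ,
      (∀ k j, 0 ≤ x k j) → (∀ j, ∑ k, x k j ≤ 1) →
      ∏ k ∈ univ.erase i, vbar k (x k) ^ b k ≤ ∏ k ∈ univ.erase i, vbar k (xmi k) ^ b k)
    (hvi_pos : 0 < vtrue (xstar i))
    (hpos : ∀ k ∈ univ.erase i, 0 < vbar k (xstar k))
    (hpos' : ∀ k ∈ univ.erase i, 0 < vbar k (xmi k))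
    -- x̃ : ANY feasible allocation (e.g. computed after player i misreports)
    (xt : Fin n → Fin m → ℝ)
    (hxt_nonneg : ∀ k j, 0 ≤ xt k j) (hxt_feas : ∀ j, ∑ k, xt k j ≤ 1)
    -- x̃_{-i} : approximate PF allocation in player i's absence
    (xtmi : Fin n → Fin m → ℝ)
    (hxtmi_nonneg : ∀ k j, 0 ≤ xtmi k j) (hxtmi_feas : ∀ j, ∑ k, xtmi k j ≤ 1)
    (hxtmi_approx : (1 - ε) * ∏ k ∈ univ.erase i, vbar k (xmi k) ^ b k
        ≤ ∏ k ∈ univ.erase i, vbar k (xtmi k) ^ b k) :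
    (min 1 (((∏ k ∈ univ.erase i, vbar k (xt k) ^ b k) /
        (∏ k ∈ univ.erase i, vbar k (xtmi k) ^ b k)) ^ (1 / b i))) * vtrue (xt i)
      ≤ (1 - ε)⁻¹ * ((((∏ k ∈ univ.erase i, vbar k (xstar k) ^ b k) /
          (∏ k ∈ univ.erase i, vbar k (xmi k) ^ b k)) ^ (1 / b i)) * vtrue (xstar i)) := by

  set A := ∏ k ∈ univ.erase i, vbar k (xstar k) ^ b k with hA_def
  set B := ∏ k ∈ univ.erase i, vbar k (xmi k) ^ b k with hB_def
  set C := ∏ k ∈ univ.erase i, vbar k (xt k) ^ b k with hC_def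
  set D := ∏ k ∈ univ.erase i, vbar k (xtmi k) ^ b k with hD_def
  have hbi : (1:ℝ) ≤ b i := hb i
  have hbpos : (0:ℝ) < b i := lt_of_lt_of_le one_pos hbi
  have hbne : b i ≠ 0 := ne_of_gt hbpos
  have hApos : 0 < A := Finset.prod_pos fun k hk => Real.rpow_pos_of_pos (hpos k hk) _
  have hBpos : 0 < B := Finset.prod_pos fun k hk => Real.rpow_pos_of_pos (hpos' k hk) _
  have hCnn : 0 ≤ C := Finset.prod_nonneg fun k hk =>
    Real.rpow_nonneg (hvbar_nonneg k (Finset.mem_erase.mp hk).1 _ (hxt_nonneg k)) _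
  have hεpos : (0:ℝ) < 1 - ε := by linarith
  have hDpos : 0 < D := lt_of_lt_of_le (by positivity) hxtmi_approx
  have hsnn : 0 ≤ vtrue (xstar i) := le_of_lt hvi_pos
  have htnn : 0 ≤ vtrue (xt i) := hvtrue_nonneg _ (hxt_nonneg i)
  have hkey : vtrue (xt i) ^ b i * C ≤ vtrue (xstar i) ^ b i * A :=
    hxstar_max xt hxt_nonneg hxt_feas
  have hkey' : C * vtrue (xt i) ^ b i ≤ vtrue (xstar i) ^ b i * A := by
    rw [mul_comm] at hkey; exact hkey
  set f := min 1 ((C / D) ^ (1 / b i)) with hf_def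
  have hfnn : 0 ≤ f := le_min one_pos.le (Real.rpow_nonneg (by positivity) _)
  set v := (1 - ε)⁻¹ * ((A / B) ^ (1 / b i) * vtrue (xstar i)) with hv_def
  have hABnn : (0:ℝ) ≤ A / B := by positivity
  have hvnn : 0 ≤ v :=
    mul_nonneg (by positivity) (mul_nonneg (Real.rpow_nonneg hABnn _) hsnn)
  have hsbnn : 0 ≤ vtrue (xstar i) ^ b i := Real.rpow_nonneg hsnn _
  have htbnn : 0 ≤ vtrue (xt i) ^ b i := Real.rpow_nonneg htnn _
  by_contra hcon
  push_neg at hcon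
  have h1 : v ^ b i < (f * vtrue (xt i)) ^ b i := Real.rpow_lt_rpow hvnn hcon hbpos
  have h2 : (f * vtrue (xt i)) ^ b i ≤ (C / D) * vtrue (xt i) ^ b i := by
    rw [Real.mul_rpow hfnn htnn]
    have hfb : f ^ b i ≤ C / D := by
      calc f ^ b i ≤ ((C / D) ^ (1 / b i)) ^ b i :=
            Real.rpow_le_rpow hfnn (min_le_right _ _) hbpos.le
        _ = C / D := by
            rw [← Real.rpow_mul (div_nonneg hCnn hDpos.le), one_div_mul_cancel hbne,
              Real.rpow_one]
    exact mul_le_mul_of_nonneg_right hfb htbnn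
  have h3 : (C / D) * vtrue (xt i) ^ b i ≤ (vtrue (xstar i) ^ b i * A) / ((1 - ε) * B) := by
    rw [div_mul_eq_mul_div]
    exact div_le_div₀ (mul_nonneg hsbnn hApos.le) hkey' (by positivity) hxtmi_approx
  have h4 : (vtrue (xstar i) ^ b i * A) / ((1 - ε) * B) ≤ v ^ b i := by
    have hv : v ^ b i = ((1 - ε)⁻¹) ^ b i * ((A / B) * vtrue (xstar i) ^ b i) := by
      rw [hv_def, Real.mul_rpow (by positivity) (mul_nonneg (Real.rpow_nonneg hABnn _) hsnn),
        Real.mul_rpow (Real.rpow_nonneg hABnn _) hsnn,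
        ← Real.rpow_mul hABnn, one_div_mul_cancel hbne, Real.rpow_one]
    rw [hv]
    have hinv : (1 - ε)⁻¹ ≤ ((1 - ε)⁻¹) ^ b i := by
      calc (1 - ε)⁻¹ = ((1 - ε)⁻¹) ^ (1:ℝ) := (Real.rpow_one _).symm
        _ ≤ _ := Real.rpow_le_rpow_of_exponent_le ((one_le_inv₀ hεpos).2 (by linarith)) hbi
    have heq : (vtrue (xstar i) ^ b i * A) / ((1 - ε) * B)
        = (1 - ε)⁻¹ * ((A / B) * vtrue (xstar i) ^ b i) := by
      field_simp
    rw [heq]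
    exact mul_le_mul_of_nonneg_right hinv (mul_nonneg hABnn hsbnn)
  linarith
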